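/- Let N >= 2, let M be a matching of K_N, let e = uv be an edge of K_N with M ∪ {e} also a matching, let G = K_N△M and G' = K_N△(M ∪ {e}) with new vertex w. Let d be a D(G')-draconian sequence with d_w = 0. Then at least one of d_u, d_v is positive, and subtracting 1 from a positive one among d_u, d_v and deleting coordinate w yields a D(G)-draconian sequence. -/
import Mathlib


/-- `c : V → ℕ` is a `D(H)`-draconian sequence for the simple graph `H` on `V`:
the entries sum to `|V| - 1` and, for every nonempty `S ⊆ V`, the partial sum over `S`
is strictly less than the size of `⋃_{i ∈ S} N_{D(H)}(i)`, where
`N_{D(H)}(i) = {ī} ∪ {j̄ : ij ∈ E(H)}`. -/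
def DraconianD {V : Type*} [Fintype V] (H : SimpleGraph V) (c : V → ℕ) : Prop :=
  (∑ v, c v) = Fintype.card V - 1 ∧
    ∀ S : Finset V, S.Nonempty →
      (∑ i ∈ S, c i) < ((S : Set V) ∪ ⋃ i ∈ S, H.neighborSet i).ncard

/-- `G △ e` for `e = uv`: add a new vertex (`none`) adjacent to exactly `u` and `v`. -/
def triExt {V : Type*} (G : SimpleGraph V) (u v : V) : SimpleGraph (Option V) :=
  SimpleGraph.fromRel fun a b =>
    (∃ x y, a = some x ∧ b = some y ∧ G.Adj x y) ∨ (a = none ∧ (b = some u ∨ b = some v))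

/-- `K_N △ 𝓜` for a matching `𝓜` with `M` edges `{f i, g i}`: the complete graph on
`Fin N` (the `inl` vertices) together with, for each `i : Fin M`, a new vertex `inr i`
adjacent to exactly `f i` and `g i`. -/
def MatchTri (N M : ℕ) (f g : Fin M → Fin N) : SimpleGraph (Fin N ⊕ Fin M) :=
  SimpleGraph.fromRel fun a b =>
    (∃ x y : Fin N, a = Sum.inl x ∧ b = Sum.inl y ∧ x ≠ y) ∨
    (∃ i : Fin M, a = Sum.inr i ∧ (b = Sum.inl (f i) ∨ b = Sum.inl (g i)))

lemma triExt_adj_some {V : Type*} {G : SimpleGraph V} {u v a b : V} :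
    (triExt G u v).Adj (some a) (some b) ↔ G.Adj a b := by
  simp only [triExt, SimpleGraph.fromRel_adj]
  constructor
  · rintro ⟨hne, (⟨x,y,hx,hy,h⟩|⟨h,_⟩)|(⟨x,y,hx,hy,h⟩|⟨h,_⟩)⟩ <;>
      simp_all <;> exact h.symm
  · intro h
    exact ⟨by simpa using h.ne, Or.inl (Or.inl ⟨a, b, rfl, rfl, h⟩)⟩

lemma triExt_adj_none {V : Type*} {G : SimpleGraph V} {u v : V} {b : Option V} :
    (triExt G u v).Adj none b ↔ b = some u ∨ b = some v := by
  simp only [triExt, SimpleGraph.fromRel_adj]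
  constructor
  · rintro ⟨hne, (⟨x,y,hx,hy,h⟩|⟨h1,h2⟩)|(⟨x,y,hx,hy,h⟩|⟨h1,h2⟩)⟩ <;> simp_all
  · rintro (rfl|rfl) <;> exact ⟨by simp, Or.inl (Or.inr (by tauto))⟩

lemma triExt_comm {V : Type*} (G : SimpleGraph V) (u v : V) :
    triExt G u v = triExt G v u := by
  ext a b
  simp only [triExt, SimpleGraph.fromRel_adj]
  constructor <;> rintro ⟨hne, (h|⟨h1,h2⟩)|(h|⟨h1,h2⟩)⟩ <;>
    first
      | exact ⟨hne, Or.inl (Or.inl h)⟩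
      | exact ⟨hne, Or.inl (Or.inr ⟨h1, h2.symm⟩)⟩
      | exact ⟨hne, Or.inr (Or.inl h)⟩
      | exact ⟨hne, Or.inr (Or.inr ⟨h1, h2.symm⟩)⟩

lemma matchTri_adj_inl {N M : ℕ} {f g : Fin M → Fin N} {x y : Fin N} :
    (MatchTri N M f g).Adj (Sum.inl x) (Sum.inl y) ↔ x ≠ y := by
  simp only [MatchTri, SimpleGraph.fromRel_adj]
  constructor
  · rintro ⟨hne, _⟩; simp_all
  · intro h; exact ⟨by simp [h], Or.inl (Or.inl ⟨x, y, rfl, rfl, h⟩)⟩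

lemma matchTri_adj_of_unmatched {N M : ℕ} {f g : Fin M → Fin N} {u : Fin N}
    (hu : ∀ i : Fin M, u ≠ f i ∧ u ≠ g i) {b : Fin N ⊕ Fin M}
    (h : (MatchTri N M f g).Adj (Sum.inl u) b) : ∃ z : Fin N, z ≠ u ∧ b = Sum.inl z := by
  rcases h with ⟨hne, (⟨x,y,hx,hy,hxy⟩|⟨i,hi,_⟩)|(⟨x,y,hx,hy,hxy⟩|⟨i,hi,hb⟩)⟩
  · exact ⟨y, by simp_all [eq_comm], hy⟩
  · simp_all
  · exact ⟨x, by simp_all [eq_comm], hx⟩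
  · rcases hb with hb|hb <;> [exact absurd (Sum.inl.inj hb) (hu i).1;
      exact absurd (Sum.inl.inj hb) (hu i).2]

lemma key (N M : ℕ) (hNM : 1 ≤ N + M) (f g : Fin M → Fin N) (u v : Fin N) (huv : u ≠ v)
    (hum : ∀ i : Fin M, u ≠ f i ∧ u ≠ g i)
    (d : Option (Fin N ⊕ Fin M) → ℕ)
    (hd : DraconianD (triExt (MatchTri N M f g) (Sum.inl u) (Sum.inl v)) d)
    (h0 : d none = 0) (hu : 0 < d (some (Sum.inl u))) :
    DraconianD (MatchTri N M f g)
      (fun x => d (some x) - if x = Sum.inl u then 1 else 0) := by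
  classical
  set G := MatchTri N M f g with hG
  set G' := triExt G (Sum.inl u) (Sum.inl v) with hG'
  obtain ⟨hsum, hset⟩ := hd
  set c : (Fin N ⊕ Fin M) → ℕ := fun x => d (some x) - if x = Sum.inl u then 1 else 0 with hc
  have htot : d none + ∑ x : Fin N ⊕ Fin M, d (some x) = N + M := by
    rw [← Fintype.sum_option d, hsum]; simp
  -- partial sum identities
  have hsubin : ∀ T : Finset (Fin N ⊕ Fin M), Sum.inl u ∈ T →
      (∑ x ∈ T, c x) + 1 = ∑ x ∈ T, d (some x) := by
    intro T hT
    rw [← Finset.sum_erase_add T c hT, ← Finset.sum_erase_add T (fun x => d (some x)) hT]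
    have he : ∑ x ∈ T.erase (Sum.inl u), c x
        = ∑ x ∈ T.erase (Sum.inl u), d (some x) := by
      refine Finset.sum_congr rfl (fun x hx => ?_)
      simp [hc, Finset.ne_of_mem_erase hx]
    rw [he]
    have : c (Sum.inl u) = d (some (Sum.inl u)) - 1 := by simp [hc]
    omega
  have hsubout : ∀ T : Finset (Fin N ⊕ Fin M), Sum.inl u ∉ T →
      (∑ x ∈ T, c x) = ∑ x ∈ T, d (some x) := by
    intro T hT
    refine Finset.sum_congr rfl (fun x hx => ?_)
    have : x ≠ Sum.inl u := by rintro rfl; exact hT hx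
    simp [hc, this]
  constructor
  · have := hsubin Finset.univ (Finset.mem_univ _)
    simp only [Fintype.card_sum, Fintype.card_fin]
    omega
  · intro T hTne
    set NT : Set (Fin N ⊕ Fin M) := ↑T ∪ ⋃ i ∈ T, G.neighborSet i with hNT
    have hNTfin : NT.Finite := Set.toFinite _
    have hmemT : ∀ x ∈ T, x ∈ NT := fun x hx => Or.inl hx
    have hmemN : ∀ x ∈ T, ∀ y, G.Adj x y → y ∈ NT := by
      intro x hx y hy
      exact Or.inr (Set.mem_biUnion hx hy)
    have hallinl : Sum.inl v ∈ T → ∀ z : Fin N, (Sum.inl z : Fin N ⊕ Fin M) ∈ NT := by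
      intro hv z
      by_cases hz : z = v
      · subst hz; exact hmemT _ hv
      · exact hmemN _ hv _ (matchTri_adj_inl.mpr (Ne.symm hz))
    set S₁ : Finset (Option (Fin N ⊕ Fin M)) := T.image some with hS₁
    have hS₁ne : S₁.Nonempty := hTne.image _
    have hS₁sum : ∑ x ∈ S₁, d x = ∑ x ∈ T, d (some x) :=
      Finset.sum_image (by simp)
    -- the closed neighborhood superset direction, for any S ⊇ S₁
    have hsup : ∀ S : Finset (Option (Fin N ⊕ Fin M)), S₁ ⊆ S →
        some '' NT ⊆ ↑S ∪ ⋃ i ∈ S, G'.neighborSet i := by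
      rintro S hS y ⟨x, hx, rfl⟩
      rcases hx with hx | hx
      · exact Or.inl (hS (Finset.mem_image_of_mem some hx))
      · rw [Set.mem_iUnion₂] at hx
        obtain ⟨i, hi, hadj⟩ := hx
        refine Or.inr (Set.mem_biUnion (hS (Finset.mem_image_of_mem some hi)) ?_)
        exact triExt_adj_some.mpr hadj
    have hncard : (some '' NT).ncard = NT.ncard :=
      Set.ncard_image_of_injective _ (Option.some_injective _)
    have hncard' : (insert none (some '' NT)).ncard = NT.ncard + 1 := by
      rw [Set.ncard_insert_of_notMem (by simp) (hNTfin.image _), hncard]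
    -- the closed neighborhood of S₁ is contained in insert none (some '' NT)
    have hsub1 : (↑S₁ ∪ ⋃ i ∈ S₁, G'.neighborSet i) ⊆ insert none (some '' NT) := by
      rintro y (hy | hy)
      · obtain ⟨x, hx, rfl⟩ := Finset.mem_image.mp (Finset.mem_coe.mp hy)
        exact Set.mem_insert_iff.mpr (Or.inr ⟨x, hmemT x hx, rfl⟩)
      · rw [Set.mem_iUnion₂] at hy
        obtain ⟨i, hi, hadj⟩ := hy
        obtain ⟨j, hj, rfl⟩ := Finset.mem_image.mp hi
        cases y with
        | none => exact Set.mem_insert _ _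
        | some x =>
          exact Set.mem_insert_iff.mpr
            (Or.inr ⟨x, hmemN j hj x (triExt_adj_some.mp hadj), rfl⟩)
    by_cases hvT : Sum.inl u ∈ T
    · -- case u ∈ T
      have hC : (↑S₁ ∪ ⋃ i ∈ S₁, G'.neighborSet i) = insert none (some '' NT) := by
        refine subset_antisymm hsub1 (Set.insert_subset ?_ (hsup S₁ le_rfl))
        refine Or.inr (Set.mem_biUnion (Finset.mem_image_of_mem some hvT) ?_)
        exact (triExt_adj_none.mpr (Or.inl rfl)).symm
      have hlt : ∑ x ∈ T, d (some x) < NT.ncard + 1 := by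
        have h3 := hset S₁ hS₁ne
        rwa [hC, hncard', hS₁sum] at h3
      have h2 := hsubin T hvT
      omega
    by_cases hwT : Sum.inl v ∈ T
    · -- case u ∉ T, v ∈ T : use S₂ = insert none (insert (some (inl u)) S₁)
      set S₂ : Finset (Option (Fin N ⊕ Fin M)) :=
        insert none (insert (some (Sum.inl u)) S₁) with hS₂
      have hnm1 : (none : Option (Fin N ⊕ Fin M)) ∉ insert (some (Sum.inl u)) S₁ := by
        simp [hS₁]
      have hnm2 : some (Sum.inl u) ∉ S₁ := by
        simp only [hS₁, Finset.mem_image]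
        rintro ⟨x, hx, hh⟩
        exact hvT ((Option.some_injective _ hh) ▸ hx)
      have hS₂ne : S₂.Nonempty := Finset.insert_nonempty _ _
      have hS₂sub : S₁ ⊆ S₂ := by
        intro x hx
        exact Finset.mem_insert_of_mem (Finset.mem_insert_of_mem hx)
      have hS₂sum : ∑ x ∈ S₂, d x
          = d (some (Sum.inl u)) + ∑ x ∈ T, d (some x) := by
        rw [hS₂, Finset.sum_insert hnm1, Finset.sum_insert hnm2, h0, hS₁sum, zero_add]
      have hC : (↑S₂ ∪ ⋃ i ∈ S₂, G'.neighborSet i) = insert none (some '' NT) := by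
        apply subset_antisymm
        · rintro y (hy | hy)
          · rw [Finset.mem_coe, hS₂, Finset.mem_insert, Finset.mem_insert] at hy
            rcases hy with rfl | rfl | hy
            · exact Set.mem_insert _ _
            · exact Or.inr ⟨_, hallinl hwT u, rfl⟩
            · obtain ⟨x, hx, rfl⟩ := Finset.mem_image.mp hy
              exact Or.inr ⟨x, hmemT x hx, rfl⟩
          · rw [Set.mem_iUnion₂] at hy
            obtain ⟨i, hi, hadj⟩ := hy
            rw [hS₂, Finset.mem_insert, Finset.mem_insert] at hi
            rcases hi with rfl | rfl | hi
            · rcases triExt_adj_none.mp hadj with rfl | rfl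
              · exact Or.inr ⟨_, hallinl hwT u, rfl⟩
              · exact Or.inr ⟨_, hallinl hwT v, rfl⟩
            · cases y with
              | none => exact Set.mem_insert _ _
              | some x =>
                obtain ⟨z, hz, rfl⟩ := matchTri_adj_of_unmatched hum
                  (triExt_adj_some.mp hadj)
                exact Or.inr ⟨_, hallinl hwT z, rfl⟩
            · obtain ⟨j, hj, rfl⟩ := Finset.mem_image.mp hi
              cases y with
              | none => exact Set.mem_insert _ _
              | some x =>
                exact Or.inr ⟨x, hmemN j hj x (triExt_adj_some.mp hadj), rfl⟩
        · refine Set.insert_subset ?_ (hsup S₂ hS₂sub)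
          exact Or.inl (Finset.mem_coe.mpr (Finset.mem_insert_self _ _))
      have hlt : ∑ x ∈ S₂, d x < NT.ncard + 1 := by
        have h3 := hset S₂ hS₂ne
        rwa [hC, hncard'] at h3
      have h2 := hsubout T hvT
      omega
    · -- case u ∉ T, v ∉ T
      have hnone : (none : Option (Fin N ⊕ Fin M)) ∉ (↑S₁ ∪ ⋃ i ∈ S₁, G'.neighborSet i) := by
        rintro (hy | hy)
        · simp [hS₁] at hy
        · rw [Set.mem_iUnion₂] at hy
          obtain ⟨i, hi, hadj⟩ := hy
          obtain ⟨j, hj, rfl⟩ := Finset.mem_image.mp hi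
          rcases triExt_adj_none.mp hadj.symm with hih | hih
          · exact hvT ((Option.some_injective _ hih) ▸ hj)
          · exact hwT ((Option.some_injective _ hih) ▸ hj)
      have hC : (↑S₁ ∪ ⋃ i ∈ S₁, G'.neighborSet i) = some '' NT := by
        refine subset_antisymm ?_ (hsup S₁ le_rfl)
        intro y hy
        rcases Set.mem_insert_iff.mp (hsub1 hy) with rfl | h
        · exact absurd hy hnone
        · exact h
      have hlt : ∑ x ∈ T, d (some x) < NT.ncard := by
        have h3 := hset S₁ hS₁ne
        rwa [hC, hncard, hS₁sum] at h3
      have h2 := hsubout T hvT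
      omega

/-- With `G = K_N △ 𝓜`, `e = uv` disjoint from the matching, and
`G' = K_N △ (𝓜 ∪ {e})` (new vertex `w = none`): if `d` is a `D(G')`-draconian sequence
with `d w = 0`, then at least one of `d u`, `d v` is positive, and subtracting `1` from a
positive one among them and deleting coordinate `w` yields a `D(G)`-draconian sequence. -/
theorem stmt8 (N M : ℕ) (hN : 2 ≤ N) (f g : Fin M → Fin N)
    (hmatch : Function.Injective (Sum.elim f g : Fin M ⊕ Fin M → Fin N))
    (u v : Fin N) (huv : u ≠ v)
    (hdisj : ∀ i : Fin M, u ≠ f i ∧ u ≠ g i ∧ v ≠ f i ∧ v ≠ g i)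
    (d : Option (Fin N ⊕ Fin M) → ℕ)
    (hd : DraconianD (triExt (MatchTri N M f g) (Sum.inl u) (Sum.inl v)) d)
    (h0 : d none = 0) :
    (0 < d (some (Sum.inl u)) ∨ 0 < d (some (Sum.inl v))) ∧
      (0 < d (some (Sum.inl u)) →
        DraconianD (MatchTri N M f g)
          (fun x => d (some x) - if x = Sum.inl u then 1 else 0)) ∧
      (0 < d (some (Sum.inl v)) →
        DraconianD (MatchTri N M f g)
          (fun x => d (some x) - if x = Sum.inl v then 1 else 0)) := by
  classical
  have hum : ∀ i, u ≠ f i ∧ u ≠ g i := fun i => ⟨(hdisj i).1, (hdisj i).2.1⟩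
  have hvm : ∀ i, v ≠ f i ∧ v ≠ g i := fun i => ⟨(hdisj i).2.2.1, (hdisj i).2.2.2⟩
  have hNM : 1 ≤ N + M := by omega
  have hd' : DraconianD (triExt (MatchTri N M f g) (Sum.inl v) (Sum.inl u)) d := by
    rw [triExt_comm]; exact hd
  refine ⟨?_, fun hu => key N M hNM f g u v huv hum d hd h0 hu,
    fun hv => key N M hNM f g v u huv.symm hvm d hd' h0 hv⟩
  set G := MatchTri N M f g with hG
  set G' := triExt G (Sum.inl u) (Sum.inl v) with hG'
  obtain ⟨hsum, hset⟩ := hd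
  by_contra hcon
  push_neg at hcon
  obtain ⟨hu0, hv0⟩ := hcon
  have hu0' : d (some (Sum.inl u)) = 0 := by omega
  have hv0' : d (some (Sum.inl v)) = 0 := by omega
  set s3 : Finset (Option (Fin N ⊕ Fin M)) :=
    {none, some (Sum.inl u), some (Sum.inl v)} with hs3def
  set T0 : Finset (Option (Fin N ⊕ Fin M)) := Finset.univ \ s3 with hT0
  have hs3sum : ∑ x ∈ s3, d x = 0 := by
    rw [hs3def]
    rw [Finset.sum_insert (by simp), Finset.sum_insert (by simp [huv]),
      Finset.sum_singleton, h0, hu0', hv0']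
    simp
  have hT0sum : ∑ x ∈ T0, d x = N + M := by
    have := Finset.sum_sdiff (f := d) (Finset.subset_univ s3)
    rw [hs3sum, add_zero] at this
    rw [hT0, this, hsum]
    simp
  rcases T0.eq_empty_or_nonempty with he | hne
  · rw [he, Finset.sum_empty] at hT0sum
    omega
  · have hlt := hset T0 hne
    have hsub : (↑T0 ∪ ⋃ i ∈ T0, G'.neighborSet i) ⊆ some '' (Set.univ) := by
      rintro y (hy | hy)
      · have := Finset.mem_coe.mp hy
        rw [hT0, Finset.mem_sdiff, hs3def] at this
        cases y with
        | none => simp at this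
        | some x => exact ⟨x, trivial, rfl⟩
      · rw [Set.mem_iUnion₂] at hy
        obtain ⟨i, hi, hadj⟩ := hy
        rw [hT0, Finset.mem_sdiff, hs3def] at hi
        cases y with
        | none =>
          rcases triExt_adj_none.mp hadj.symm with rfl | rfl <;> simp at hi
        | some x => exact ⟨x, trivial, rfl⟩
    have hcard : (some '' (Set.univ : Set (Fin N ⊕ Fin M))).ncard = N + M := by
      rw [Set.ncard_image_of_injective _ (Option.some_injective _), Set.ncard_univ]
      simp
    have := Set.ncard_le_ncard hsub (Set.toFinite _)
    omega
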